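/- arXiv:1007.1039 — 2 statements merged into one kernel-verified Lean document; each statement's English description precedes it below -/
import Mathlib

section
/- For every n ≥ 1 and every s > 0, the matrix s·I − Q^{(n)} is invertible and 1 − s·Σ_{j=0}^{n−1} ((s·I − Q^{(n)})^{−1})_{0,j} = det(−Q^{(n)}) / det(s·I − Q^{(n)}) = ∏_{ν=1}^n λ_ν^{(n)}/(s + λ_ν^{(n)}), where λ_1^{(n)},…,λ_n^{(n)} are the eigenvalues of −Q^{(n)}. (The left-hand side is the Laplace transform E e^{−s T_{0,n}} of the hitting time of state n from state 0.) -/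
/-- The generator `Q^(n)` of the birth–death chain on `{0,…,n}` absorbed at `n`,
restricted to the transient states `{0,…,n-1}`. -/
noncomputable def bdMatrix (a b : ℕ → ℝ) (n : ℕ) : Matrix (Fin n) (Fin n) ℝ :=
  fun i j =>
    if (j : ℕ) = (i : ℕ) + 1 then b i
    else if (i : ℕ) = (j : ℕ) + 1 then a i
    else if (i : ℕ) = (j : ℕ) then
      (if (i : ℕ) = 0 then -(b 0) else -(a i + b i))
    else 0

lemma mysum_ite {m : ℕ} (c : ℕ) (v : ℝ) :
    (∑ j : Fin (m+1), if (j:ℕ) = c then v else 0) = if c < m+1 then v else 0 := by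
  split_ifs with hc
  · calc (∑ j : Fin (m+1), if (j:ℕ) = c then v else 0)
        = ∑ j : Fin (m+1), if j = (⟨c,hc⟩ : Fin (m+1)) then v else 0 :=
          Finset.sum_congr rfl (fun j _ => if_congr (by simp [Fin.ext_iff]) rfl rfl)
      _ = v := by simp
  · apply Finset.sum_eq_zero; intro j _; rw [if_neg]; have := j.isLt; omega

lemma mysum_ite2 {m : ℕ} (i : Fin (m+1)) (v : ℝ) :
    (∑ j : Fin (m+1), if (i:ℕ) = (j:ℕ)+1 then v else 0) = if 1 ≤ (i:ℕ) then v else 0 := by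
  rcases Nat.eq_zero_or_pos (i:ℕ) with h | h
  · rw [if_neg (by omega)]
    apply Finset.sum_eq_zero; intro j _; rw [if_neg (by omega)]
  · rw [if_pos (by omega : 1 ≤ (i:ℕ))]
    calc (∑ j : Fin (m+1), if (i:ℕ) = (j:ℕ)+1 then v else 0)
        = ∑ j : Fin (m+1), if (j:ℕ) = (i:ℕ)-1 then v else 0 :=
          Finset.sum_congr rfl (fun j _ => if_congr (by omega) rfl rfl)
      _ = v := by rw [mysum_ite, if_pos (by omega)]

lemma adj_corner {m : ℕ} (A : Matrix (Fin (m+1)) (Fin (m+1)) ℝ)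
    (h : ∀ i j : Fin (m+1), (i:ℕ) + 1 < (j:ℕ) → A i j = 0) :
    A.adjugate ⟨0, Nat.succ_pos m⟩ (Fin.last m)
      = (-1)^m * ∏ k : Fin m, A k.castSucc k.succ := by
  have h0 : (⟨0, Nat.succ_pos m⟩ : Fin (m+1)) = 0 := rfl
  rw [h0, Matrix.adjugate_fin_succ_eq_det_submatrix]
  have hsub : A.submatrix (Fin.last m).succAbove (0 : Fin (m+1)).succAbove
      = Matrix.of (fun k l => A k.castSucc l.succ) := by
    funext k l
    simp [Matrix.submatrix_apply, Fin.succAbove_last, Fin.zero_succAbove]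
  rw [hsub]
  have htri : (Matrix.of (fun k l => A k.castSucc l.succ) :
      Matrix (Fin m) (Fin m) ℝ).BlockTriangular OrderDual.toDual := by
    intro k l hkl
    have hkl' : (k:ℕ) < (l:ℕ) := hkl
    apply h
    simp only [Fin.coe_castSucc, Fin.val_succ]
    omega
  rw [Matrix.det_of_lowerTriangular _ htri]
  simp [Fin.val_last]

lemma bd_apply {m : ℕ} (a b : ℕ → ℝ) (i j : Fin (m+1)) :
    bdMatrix a b (m+1) i j =
      (if (j:ℕ) = (i:ℕ) + 1 then b i else 0)
      + (if (i:ℕ) = (j:ℕ) + 1 then a i else 0)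
      + (if j = i then (if (i:ℕ) = 0 then -(b 0) else -(a i + b i)) else 0) := by
  unfold bdMatrix
  have hij : (j = i) ↔ ((j:ℕ) = (i:ℕ)) := Fin.ext_iff
  simp only [hij]
  split_ifs <;> first | rfl | omega | ring

lemma bd_rowsum {m : ℕ} (a b : ℕ → ℝ) (i : Fin (m+1)) :
    ∑ j, bdMatrix a b (m+1) i j = if (i:ℕ) = m then -(b m) else 0 := by
  have hi := i.isLt
  simp_rw [bd_apply, Finset.sum_add_distrib, mysum_ite, mysum_ite2]
  have h3 : (∑ j : Fin (m+1), if j = i then (if (i:ℕ) = 0 then -(b 0) else -(a i + b i)) else 0)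
      = if (i:ℕ) = 0 then -(b 0) else -(a i + b i) := by simp
  rw [h3]
  split_ifs <;> first | omega | (simp_all; try ring) | ring1

open Matrix Polynomial in
set_option maxRecDepth 10000 in
lemma my_eval_charpoly {k : ℕ} (M : Matrix (Fin k) (Fin k) ℝ) (x : ℝ) :
    M.charpoly.eval x = (x • (1 : Matrix (Fin k) (Fin k) ℝ) - M).det := by
  rw [Matrix.charpoly, eval_det, Matrix.matPolyEquiv_charmatrix]
  simp [Matrix.scalar, smul_eq_diagonal_mul]
  congr 1

lemma prod_neg_fin {m : ℕ} (f : Fin m → ℝ) :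
    ∏ k : Fin m, (-(f k)) = (-1)^m * ∏ k : Fin m, f k := by
  have h : ∀ k : Fin m, -(f k) = (-1) * f k := fun k => by ring
  rw [Finset.prod_congr rfl (fun k _ => h k), Finset.prod_mul_distrib, Finset.prod_const,
    Finset.card_univ, Fintype.card_fin]

/-- for every `n ≥ 1` and `s > 0`, the matrix `s•I − Q^{(n)}` is invertible and
`1 − s·Σ_j ((s•I − Q^{(n)})⁻¹)_{0,j} = det(−Q^{(n)})/det(s•I − Q^{(n)}) = ∏_ν λ_ν/(s+λ_ν)`. -/
theorem laplace_transform_hitting_time_from_zero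
    (a b : ℕ → ℝ) (ha : ∀ i, 1 ≤ i → 0 < a i) (hb : ∀ i, 0 < b i)
    (n : ℕ) (hn : 1 ≤ n)
    (lam : Fin n → ℝ)
    (hchar : (-(bdMatrix a b n)).charpoly =
      ∏ ν : Fin n, (Polynomial.X - Polynomial.C (lam ν)))
    (s : ℝ) (hs : 0 < s) :
    IsUnit (s • (1 : Matrix (Fin n) (Fin n) ℝ) - bdMatrix a b n).det ∧
    1 - s * ∑ j : Fin n,
        (s • (1 : Matrix (Fin n) (Fin n) ℝ) - bdMatrix a b n)⁻¹ ⟨0, hn⟩ j =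
      (-(bdMatrix a b n)).det /
        (s • (1 : Matrix (Fin n) (Fin n) ℝ) - bdMatrix a b n).det ∧
    (-(bdMatrix a b n)).det /
        (s • (1 : Matrix (Fin n) (Fin n) ℝ) - bdMatrix a b n).det =
      ∏ ν : Fin n, lam ν / (s + lam ν) := by
  obtain ⟨m, rfl⟩ : ∃ m, n = m + 1 := ⟨n - 1, by omega⟩
  set Q : Matrix (Fin (m+1)) (Fin (m+1)) ℝ := bdMatrix a b (m+1) with hQdef
  set M : Matrix (Fin (m+1)) (Fin (m+1)) ℝ := s • 1 - Q with hMdef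
  set N : Matrix (Fin (m+1)) (Fin (m+1)) ℝ := -Q with hNdef
  set z : Fin (m+1) := ⟨0, hn⟩ with hzdef
  -- off-diagonal description
  have hoffQ : ∀ i j : Fin (m+1), j ≠ i → Q i j =
      (if (j:ℕ) = (i:ℕ) + 1 then b i else 0) + (if (i:ℕ) = (j:ℕ)+1 then a i else 0) := by
    intro i j hij
    rw [hQdef, bd_apply, if_neg hij, add_zero]
  have hMoff : ∀ i j : Fin (m+1), j ≠ i → M i j =
      -((if (j:ℕ) = (i:ℕ) + 1 then b i else 0) + (if (i:ℕ) = (j:ℕ)+1 then a i else 0)) := by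
    intro i j hij
    rw [hMdef]
    simp only [Matrix.sub_apply, Matrix.smul_apply, Matrix.one_apply_ne' hij, smul_zero,
      zero_sub, hoffQ i j hij]
  have hQii : ∀ i : Fin (m+1), Q i i = if (i:ℕ) = 0 then -(b 0) else -(a i + b i) := by
    intro i
    rw [hQdef, bd_apply, if_neg (by omega), if_neg (by omega), if_pos rfl, zero_add, zero_add]
  have hMii : ∀ i : Fin (m+1), M i i = s + (if (i:ℕ) = 0 then b 0 else a i + b i) := by
    intro i
    rw [hMdef]
    simp only [Matrix.sub_apply, Matrix.smul_apply, Matrix.one_apply_eq, smul_eq_mul, mul_one,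
      hQii i]
    split_ifs <;> ring
  -- determinant nonzero via diagonal dominance
  have hdet : M.det ≠ 0 := by
    apply det_ne_zero_of_sum_row_lt_diag
    intro i
    have hai : 1 ≤ (i:ℕ) → 0 < a i := fun h => ha _ h
    have hMiipos : 0 < M i i := by
      rw [hMii i]
      split_ifs with h
      · linarith [hb 0]
      · have := hai (by omega)
        linarith [hb (i:ℕ)]
    have hnorm : ∀ j ∈ Finset.univ.erase i, ‖M i j‖ =
        (if (j:ℕ) = (i:ℕ) + 1 then b i else 0) + (if (i:ℕ) = (j:ℕ)+1 then a i else 0) := by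
      intro j hj
      have hji : j ≠ i := (Finset.mem_erase.mp hj).1
      rw [hMoff i j hji, norm_neg, Real.norm_eq_abs]
      have hex : ¬ ((j:ℕ) = (i:ℕ)+1 ∧ (i:ℕ) = (j:ℕ)+1) := by omega
      split_ifs with h1 h2 h2
      · omega
      · rw [add_zero]; exact abs_of_pos (hb _)
      · rw [zero_add]; exact abs_of_pos (hai (by omega))
      · simp
    rw [Finset.sum_congr rfl hnorm]
    rw [Finset.sum_add_distrib]
    have hb1 : (∑ j ∈ Finset.univ.erase i, if (j:ℕ) = (i:ℕ) + 1 then b i else 0) ≤ b i := by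
      have h1 : (∑ j ∈ Finset.univ.erase i, if (j:ℕ) = (i:ℕ) + 1 then b i else 0)
          ≤ ∑ j : Fin (m+1), if (j:ℕ) = (i:ℕ) + 1 then b i else 0 := by
        apply Finset.sum_le_sum_of_subset_of_nonneg (Finset.erase_subset _ _)
        intro j _ _
        split_ifs
        · exact le_of_lt (hb _)
        · exact le_rfl
      rw [mysum_ite] at h1
      refine h1.trans ?_
      split_ifs
      · exact le_rfl
      · exact le_of_lt (hb _)
    rcases Nat.eq_zero_or_pos (i:ℕ) with h0 | h0
    · have ha0 : (∑ j ∈ Finset.univ.erase i, if (i:ℕ) = (j:ℕ) + 1 then a i else 0) = 0 := by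
        apply Finset.sum_eq_zero; intro j _; rw [if_neg (by omega)]
      rw [ha0, add_zero, Real.norm_eq_abs, abs_of_pos hMiipos, hMii i, if_pos h0]
      have heq : b (i:ℕ) = b 0 := by rw [h0]
      linarith
    · have ha1 : (∑ j ∈ Finset.univ.erase i, if (i:ℕ) = (j:ℕ) + 1 then a i else 0) ≤ a i := by
        have h1 : (∑ j ∈ Finset.univ.erase i, if (i:ℕ) = (j:ℕ) + 1 then a i else 0)
            ≤ ∑ j : Fin (m+1), if (i:ℕ) = (j:ℕ) + 1 then a i else 0 := by
          apply Finset.sum_le_sum_of_subset_of_nonneg (Finset.erase_subset _ _)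
          intro j _ _
          split_ifs
          · exact le_of_lt (hai (by omega))
          · exact le_rfl
        rw [mysum_ite2] at h1
        refine h1.trans ?_
        rw [if_pos (by omega)]
      rw [Real.norm_eq_abs, abs_of_pos hMiipos, hMii i, if_neg (by omega)]
      have := hai (by omega)
      linarith
  -- row sums
  have hMrow : ∀ i : Fin (m+1), ∑ j, M i j = s + (if (i:ℕ) = m then b m else 0) := by
    intro i
    have h1 : ∑ j, (s • (1 : Matrix (Fin (m+1)) (Fin (m+1)) ℝ)) i j = s := by
      simp [Matrix.one_apply, Finset.sum_ite_eq]
    simp_rw [hMdef, Matrix.sub_apply, Finset.sum_sub_distrib]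
    rw [h1, hQdef, bd_rowsum]
    split_ifs <;> ring
  have hNrow : ∀ i : Fin (m+1), ∑ j, N i j = if (i:ℕ) = m then b m else 0 := by
    intro i
    simp_rw [hNdef, Matrix.neg_apply, Finset.sum_neg_distrib]
    rw [hQdef, bd_rowsum]
    split_ifs <;> ring
  -- key adjugate identity applied to ones vector
  have hadj : ∀ (A : Matrix (Fin (m+1)) (Fin (m+1)) ℝ),
      (A.adjugate.mulVec (A.mulVec (fun _ => 1))) z = A.det := by
    intro A
    rw [Matrix.mulVec_mulVec, Matrix.adjugate_mul, Matrix.smul_mulVec, Matrix.one_mulVec]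
    simp
  have hrowvec : ∀ (A : Matrix (Fin (m+1)) (Fin (m+1)) ℝ),
      A.mulVec (fun _ => 1) = fun i => ∑ j, A i j := by
    intro A
    funext i
    simp [Matrix.mulVec, dotProduct]
  have hcorner_sum : ∀ (A : Matrix (Fin (m+1)) (Fin (m+1)) ℝ) (c : ℝ),
      (∑ j : Fin (m+1), A.adjugate z j * (if (j:ℕ) = m then c else 0))
        = A.adjugate z (Fin.last m) * c := by
    intro A c
    calc (∑ j : Fin (m+1), A.adjugate z j * (if (j:ℕ) = m then c else 0))
        = ∑ j : Fin (m+1), if j = Fin.last m then A.adjugate z j * c else 0 := by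
          apply Finset.sum_congr rfl
          intro j _
          rw [mul_ite, mul_zero]
          exact if_congr (by simp [Fin.ext_iff, Fin.val_last]) rfl rfl
      _ = A.adjugate z (Fin.last m) * c := by
          rw [Finset.sum_ite_eq' Finset.univ (Fin.last m)]
          simp
  -- corner adjugate values
  have hMzero : ∀ i j : Fin (m+1), (i:ℕ) + 1 < (j:ℕ) → M i j = 0 := by
    intro i j hij
    rw [hMoff i j (by intro h; rw [h] at hij; omega)]
    rw [if_neg (by omega), if_neg (by omega)]
    ring
  have hNzero : ∀ i j : Fin (m+1), (i:ℕ) + 1 < (j:ℕ) → N i j = 0 := by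
    intro i j hij
    rw [hNdef]
    simp only [Matrix.neg_apply]
    rw [hoffQ i j (by intro h; rw [h] at hij; omega)]
    rw [if_neg (by omega), if_neg (by omega)]
    ring
  have hMsup : ∀ k : Fin m, M k.castSucc k.succ = -(b (k:ℕ)) := by
    intro k
    rw [hMoff _ _ (by simp [Fin.ext_iff])]
    rw [if_pos (by simp), if_neg (by simp [Fin.ext_iff]; omega)]
    simp
  have hNsup : ∀ k : Fin m, N k.castSucc k.succ = -(b (k:ℕ)) := by
    intro k
    rw [hNdef]
    simp only [Matrix.neg_apply]
    rw [hoffQ _ _ (by simp [Fin.ext_iff])]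
    rw [if_pos (by simp), if_neg (by simp [Fin.ext_iff]; omega)]
    simp
  have hprodneg : (-1:ℝ)^m * ∏ k : Fin m, (-(b (k:ℕ))) = ∏ k : Fin m, b (k:ℕ) := by
    rw [prod_neg_fin, ← mul_assoc, ← pow_add]
    rw [Even.neg_one_pow ⟨m, by ring⟩, one_mul]
  have hMcorner : M.adjugate z (Fin.last m) = ∏ k : Fin m, b (k:ℕ) := by
    rw [hzdef]
    rw [adj_corner M hMzero]
    rw [Finset.prod_congr rfl (fun k _ => hMsup k), hprodneg]
  have hNcorner : N.adjugate z (Fin.last m) = ∏ k : Fin m, b (k:ℕ) := by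
    rw [hzdef]
    rw [adj_corner N hNzero]
    rw [Finset.prod_congr rfl (fun k _ => hNsup k), hprodneg]
  -- det identities
  have hdetM_eq : M.det = s * (∑ j, M.adjugate z j) + (∏ k : Fin m, b (k:ℕ)) * b m := by
    have h1 := hadj M
    rw [hrowvec M] at h1
    have h2 : (M.adjugate.mulVec fun i => ∑ j, M i j) z
        = s * (∑ j, M.adjugate z j) + M.adjugate z (Fin.last m) * b m := by
      simp only [Matrix.mulVec, dotProduct]
      calc (∑ j, M.adjugate z j * ∑ k, M j k)
          = ∑ j, (M.adjugate z j * s + M.adjugate z j * (if (j:ℕ) = m then b m else 0)) := by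
            apply Finset.sum_congr rfl
            intro j _
            rw [hMrow j]
            ring
        _ = _ := by
            rw [Finset.sum_add_distrib, hcorner_sum M (b m), ← Finset.sum_mul]
            ring
    rw [h2] at h1
    rw [← h1, hMcorner]
  have hdetN_eq : N.det = (∏ k : Fin m, b (k:ℕ)) * b m := by
    have h1 := hadj N
    rw [hrowvec N] at h1
    have h2 : (N.adjugate.mulVec fun i => ∑ j, N i j) z
        = N.adjugate z (Fin.last m) * b m := by
      simp only [Matrix.mulVec, dotProduct]
      calc (∑ j, N.adjugate z j * ∑ k, N j k)
          = ∑ j, N.adjugate z j * (if (j:ℕ) = m then b m else 0) := by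
            apply Finset.sum_congr rfl
            intro j _
            rw [hNrow j]
        _ = _ := hcorner_sum N (b m)
    rw [h2] at h1
    rw [← h1, hNcorner]
  -- eigenvalue identities
  have hdetN_lam : N.det = ∏ ν : Fin (m+1), lam ν := by
    have h0 := congrArg (Polynomial.eval 0) hchar
    rw [my_eval_charpoly] at h0
    simp only [Polynomial.eval_prod, Polynomial.eval_sub, Polynomial.eval_X,
      Polynomial.eval_C, zero_smul, zero_sub] at h0
    rw [Matrix.det_neg] at h0
    simp only [Fintype.card_fin] at h0
    rw [prod_neg_fin] at h0
    exact mul_left_cancel₀ (pow_ne_zero (m+1) (by norm_num : (-1:ℝ) ≠ 0)) h0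
  have hdetM_lam : M.det = ∏ ν : Fin (m+1), (s + lam ν) := by
    have h0 := congrArg (Polynomial.eval (-s)) hchar
    rw [my_eval_charpoly] at h0
    have hneg : ((-s) • (1 : Matrix (Fin (m+1)) (Fin (m+1)) ℝ) - N) = -M := by
      rw [hMdef, hNdef]
      rw [sub_neg_eq_add, neg_smul, neg_sub]
      abel
    rw [hneg, Matrix.det_neg] at h0
    simp only [Fintype.card_fin, Polynomial.eval_prod, Polynomial.eval_sub, Polynomial.eval_X,
      Polynomial.eval_C] at h0
    have h1 : (∏ ν : Fin (m+1), (-s - lam ν)) = (-1:ℝ)^(m+1) * ∏ ν : Fin (m+1), (s + lam ν) := by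
      rw [← prod_neg_fin]
      apply Finset.prod_congr rfl
      intro ν _
      ring
    rw [h1] at h0
    exact mul_left_cancel₀ (pow_ne_zero (m+1) (by norm_num : (-1:ℝ) ≠ 0)) h0
  -- assemble
  refine ⟨isUnit_iff_ne_zero.mpr hdet, ?_, ?_⟩
  · have hinv : M⁻¹ = M.det⁻¹ • M.adjugate := by
      rw [Matrix.inv_def, Ring.inverse_eq_inv]
    rw [hinv]
    simp only [Matrix.smul_apply, smul_eq_mul]
    rw [← Finset.mul_sum]
    have hsS : s * (∑ j, M.adjugate z j) = M.det - N.det := by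
      rw [hdetM_eq, hdetN_eq]
      ring
    have hfin : s * (M.det⁻¹ * (∑ j, M.adjugate z j)) = (M.det - N.det) / M.det := by
      rw [← hsS]; ring
    rw [hfin]
    field_simp
    ring
  · rw [hdetN_lam, hdetM_lam, ← Finset.prod_div_distrib]
end

section
/- For all integers 1 ≤ i < n and every s > 0, 1 − s·Σ_{j=0}^{n−1} ((s·I − Q^{(n)})^{−1})_{i,j} = [det(−Q^{(n)}) · det(s·I − Q^{(i)})] / [det(s·I − Q^{(n)}) · det(−Q^{(i)})]. (This is Corollary 2.1: the Laplace transform E e^{−s T_{i,n}} of the hitting time of n from i equals ∏_{ν=1}^n λ_ν^{(n)}/(s+λ_ν^{(n)}) divided by ∏_{ν=1}^i λ_ν^{(i)}/(s+λ_ν^{(i)}).) -/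
namespace BDaux

lemma val_succAbove {n : ℕ} (p : Fin (n+1)) (i : Fin n) :
    ((p.succAbove i : Fin (n+1)) : ℕ) = if (i:ℕ) < (p:ℕ) then (i:ℕ) else (i:ℕ)+1 := by
  unfold Fin.succAbove
  split_ifs with h1 h2 h2 <;>
    simp_all [Fin.lt_def, Fin.coe_castSucc, Fin.val_succ]

variable (a b : ℕ → ℝ)

noncomputable def M (s : ℝ) (n : ℕ) : Matrix (Fin n) (Fin n) ℝ :=
  s • (1 : Matrix (Fin n) (Fin n) ℝ) - bdMatrix a b n

lemma M_apply (s : ℝ) (n : ℕ) (i j : Fin n) :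
    M a b s n i j =
      if (j : ℕ) = (i : ℕ) + 1 then -b i
      else if (i : ℕ) = (j : ℕ) + 1 then -a i
      else if (i : ℕ) = (j : ℕ) then
        (s + if (i : ℕ) = 0 then b 0 else a i + b i)
      else 0 := by
  simp only [M, Matrix.sub_apply, Matrix.smul_apply, Matrix.one_apply, bdMatrix, smul_eq_mul,
    mul_ite, mul_one, mul_zero, smul_ite]
  simp only [show (i = j) ↔ ((i:ℕ) = (j:ℕ)) from Fin.ext_iff]
  split_ifs <;> first | omega | ring

noncomputable def D (s : ℝ) (n : ℕ) : ℝ := (M a b s n).det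

lemma M_submatrix {s : ℝ} {n m : ℕ} (f g : Fin m → Fin n)
    (hf : ∀ x, ((f x : Fin n) : ℕ) = (x:ℕ)) (hg : ∀ x, ((g x : Fin n) : ℕ) = (x:ℕ)) :
    (M a b s n).submatrix f g = M a b s m := by
  ext i j
  rw [Matrix.submatrix_apply, M_apply, M_apply, hf, hg]

end BDaux

namespace BDaux

lemma D_zero (s : ℝ) : D a b s 0 = 1 := Matrix.det_fin_zero

lemma D_one (s : ℝ) : D a b s 1 = s + b 0 := by
  rw [D, Matrix.det_fin_one, M_apply]
  norm_num

lemma val_succAbove_lt {n : ℕ} (p : Fin (n+1)) (i : Fin n) (h : (i:ℕ) < (p:ℕ)) :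
    ((p.succAbove i : Fin (n+1)) : ℕ) = (i:ℕ) := by
  rw [val_succAbove, if_pos h]

lemma val_succAbove_ge {n : ℕ} (p : Fin (n+1)) (i : Fin n) (h : (p:ℕ) ≤ (i:ℕ)) :
    ((p.succAbove i : Fin (n+1)) : ℕ) = (i:ℕ) + 1 := by
  rw [val_succAbove, if_neg (not_lt.mpr h)]

lemma D_rec (s : ℝ) (k : ℕ) :
    D a b s (k+2) =
      (s + a (k+1) + b (k+1)) * D a b s (k+1) - a (k+1) * b k * D a b s k := by
  have hk : k < k + 2 := by omega
  have hk1 : k + 1 < k + 2 := by omega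
  set A := M a b s (k+2) with hA
  have hexp := Matrix.det_succ_row A (Fin.last (k+1))
  set f : Fin (k+2) → ℝ := fun j =>
    (-1 : ℝ) ^ ((Fin.last (k+1) : ℕ) + (j : ℕ)) * A (Fin.last (k+1)) j *
      (A.submatrix (Fin.last (k+1)).succAbove j.succAbove).det with hf
  have hlastval : ((Fin.last (k+1) : Fin (k+2)) : ℕ) = k + 1 := rfl
  have hkv : ((⟨k, hk⟩ : Fin (k+2)) : ℕ) = k := rfl
  have hk1v : ((⟨k+1, hk1⟩ : Fin (k+2)) : ℕ) = k + 1 := rfl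
  have hsum : ∑ j : Fin (k+2), f j = f ⟨k, hk⟩ + f ⟨k+1, hk1⟩ := by
    have hsub : ({⟨k, hk⟩, ⟨k+1, hk1⟩} : Finset (Fin (k+2))) ⊆ Finset.univ :=
      Finset.subset_univ _
    have hz : ∀ j ∈ Finset.univ, j ∉ ({⟨k, hk⟩, ⟨k+1, hk1⟩} : Finset (Fin (k+2))) →
        f j = 0 := by
      intro j _ hjn
      simp only [Finset.mem_insert, Finset.mem_singleton, Fin.ext_iff, hkv, hk1v] at hjn
      push_neg at hjn
      have h0 : A (Fin.last (k+1)) j = 0 := by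
        rw [hA, M_apply]
        simp only [Fin.val_last]
        have := j.isLt
        split_ifs <;> first | rfl | (exfalso; omega)
      rw [hf]
      simp [h0]
    rw [← Finset.sum_subset hsub hz, Finset.sum_insert, Finset.sum_singleton]
    simp [Fin.ext_iff]
  rw [D, hexp, hsum]
  -- the term at column k+1
  have hterm2 : f ⟨k+1, hk1⟩ = (s + (a (k+1) + b (k+1))) * D a b s (k+1) := by
    have hlast : (⟨k+1, hk1⟩ : Fin (k+2)) = Fin.last (k+1) := rfl
    have hentry : A (Fin.last (k+1)) (⟨k+1, hk1⟩ : Fin (k+2)) =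
        s + (a (k+1) + b (k+1)) := by
      rw [hA, M_apply]
      simp only [Fin.val_last, hk1v]
      norm_num
    have hminor : A.submatrix (Fin.last (k+1)).succAbove
        ((⟨k+1, hk1⟩ : Fin (k+2)).succAbove) = M a b s (k+1) := by
      rw [hA, hlast]
      apply M_submatrix
      · intro x; exact val_succAbove_lt _ _ (by simpa using x.isLt)
      · intro x; exact val_succAbove_lt _ _ (by simpa using x.isLt)
    have hsign : (-1 : ℝ) ^ ((Fin.last (k+1) : ℕ) + ((⟨k+1, hk1⟩ : Fin (k+2)) : ℕ)) = 1 := by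
      rw [hlastval, hk1v, show (k+1) + (k+1) = 2*(k+1) by ring, pow_mul]
      norm_num
    rw [hf]
    simp only [hentry, hminor, hsign, one_mul]
    rw [D]
  -- the term at column k
  have hterm1 : f ⟨k, hk⟩ = -(a (k+1) * (b k * D a b s k)) := by
    have hentry : A (Fin.last (k+1)) (⟨k, hk⟩ : Fin (k+2)) = -a (k+1) := by
      rw [hA, M_apply]
      simp only [Fin.val_last, hkv]
      rw [if_neg (by omega), if_pos trivial]
    set B := A.submatrix (Fin.last (k+1)).succAbove
        ((⟨k, hk⟩ : Fin (k+2)).succAbove) with hB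
    have hrowval : ∀ r : Fin (k+1), (((Fin.last (k+1)).succAbove r : Fin (k+2)) : ℕ) = (r:ℕ) :=
      fun r => val_succAbove_lt _ _ (by simpa using r.isLt)
    have hcolval : ((((⟨k, hk⟩ : Fin (k+2)).succAbove (Fin.last k)) : Fin (k+2)) : ℕ)
        = k + 1 := by
      have hle : ((⟨k, hk⟩ : Fin (k+2)) : ℕ) ≤ ((Fin.last k : Fin (k+1)) : ℕ) := by
        rw [hkv, Fin.val_last]
      rw [val_succAbove_ge _ _ hle, Fin.val_last]
    have hBdet : B.det = -(b k * D a b s k) := by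
      have hexpB := Matrix.det_succ_column B (Fin.last k)
      have hBlastcol : ∀ r : Fin (k+1), (r : ℕ) ≠ k → B r (Fin.last k) = 0 := by
        intro r hr
        rw [hB, Matrix.submatrix_apply, hA, M_apply]
        rw [hrowval r] -- may fail as rw; use simp only
        simp only [hcolval]
        have := r.isLt
        split_ifs <;> first | rfl | (exfalso; omega)
      have hsumB : ∑ r : Fin (k+1),
          (-1 : ℝ) ^ ((r : ℕ) + ((Fin.last k : Fin (k+1)) : ℕ)) * B r (Fin.last k) *
            (B.submatrix r.succAbove (Fin.last k).succAbove).det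
          = (-1 : ℝ) ^ (((Fin.last k : Fin (k+1)) : ℕ) + ((Fin.last k : Fin (k+1)) : ℕ))
              * B (Fin.last k) (Fin.last k) *
            (B.submatrix (Fin.last k).succAbove (Fin.last k).succAbove).det := by
        apply Finset.sum_eq_single
        · intro r _ hr
          have hr' : (r : ℕ) ≠ k := by
            intro h; exact hr (Fin.ext (by simpa using h))
          rw [hBlastcol r hr', mul_zero, zero_mul]
        · intro h; exact absurd (Finset.mem_univ _) h
      have hBentry : B (Fin.last k) (Fin.last k) = -b k := by
        rw [hB, Matrix.submatrix_apply, hA, M_apply]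
        rw [if_pos]
        · rw [hrowval, Fin.val_last]
        · rw [hrowval, hcolval, Fin.val_last]
      have hBminor : B.submatrix (Fin.last k).succAbove (Fin.last k).succAbove
          = M a b s k := by
        rw [hB, Matrix.submatrix_submatrix, hA]
        apply M_submatrix
        · intro x
          have hx : (((Fin.last k).succAbove x : Fin (k+1)) : ℕ) = (x:ℕ) :=
            val_succAbove_lt _ _ (by simp)
          simp only [Function.comp_apply]
          rw [val_succAbove_lt _ _ (by simp), hx]
        · intro x
          have hx : (((Fin.last k).succAbove x : Fin (k+1)) : ℕ) = (x:ℕ) :=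
            val_succAbove_lt _ _ (by simp)
          simp only [Function.comp_apply]
          rw [val_succAbove_lt _ _ (by rw [hx, hkv]; exact x.isLt), hx]
      have hsign2 : (-1 : ℝ) ^ (((Fin.last k : Fin (k+1)) : ℕ) + ((Fin.last k : Fin (k+1)) : ℕ)) = 1 := by
        simp only [Fin.val_last]
        rw [show k + k = 2*k by ring, pow_mul]
        norm_num
      rw [hexpB, hsumB, hsign2, hBentry, hBminor, one_mul, D]
      ring
    have hsign : (-1 : ℝ) ^ ((Fin.last (k+1) : ℕ) + ((⟨k, hk⟩ : Fin (k+2)) : ℕ)) = -1 := by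
      rw [hlastval, hkv, show (k+1) + k = 2*k+1 by ring, pow_succ, pow_mul]
      norm_num
    rw [hf]
    simp only [hentry, ← hB, hBdet, hsign]
    ring
  rw [hterm1, hterm2, D, D]
  ring

end BDaux

namespace BDaux

variable (a b : ℕ → ℝ)

lemma D_pos_aux (ha : ∀ k, 1 ≤ k → 0 < a k) (hb : ∀ k, 0 < b k)
    (s : ℝ) (hs : 0 ≤ s) :
    ∀ k, 0 < D a b s k ∧ b k * D a b s k ≤ D a b s (k+1) := by
  intro k
  induction k with
  | zero =>
    constructor
    · rw [D_zero]; norm_num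
    · rw [D_zero, D_one]; nlinarith [hb 0]
  | succ k ih =>
    have h1 : 0 < D a b s (k+1) := lt_of_lt_of_le (mul_pos (hb k) ih.1) ih.2
    refine ⟨h1, ?_⟩
    rw [D_rec]
    nlinarith [ha (k+1) (by omega), hb (k+1), hb k, ih.1, ih.2, h1, hs]

lemma D_pos (ha : ∀ k, 1 ≤ k → 0 < a k) (hb : ∀ k, 0 < b k)
    (s : ℝ) (hs : 0 ≤ s) (k : ℕ) : 0 < D a b s k :=
  (D_pos_aux a b ha hb s hs k).1

lemma M_apply_mk (s : ℝ) (n : ℕ) (x y : ℕ) (hx : x < n) (hy : y < n) :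
    M a b s n ⟨x, hx⟩ ⟨y, hy⟩ =
      if y = x + 1 then -b x
      else if x = y + 1 then -a x
      else if x = y then (s + if x = 0 then b 0 else a x + b x)
      else 0 :=
  M_apply a b s n ⟨x, hx⟩ ⟨y, hy⟩

lemma sum_two {n : ℕ} (g : Fin n → ℝ) (p q : Fin n) (hpq : p ≠ q)
    (h0 : ∀ x, x ≠ p → x ≠ q → g x = 0) : ∑ x, g x = g p + g q := by
  have h := Finset.sum_subset (Finset.subset_univ ({p, q} : Finset (Fin n)))
    (fun x _ hx => by
      simp only [Finset.mem_insert, Finset.mem_singleton] at hx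
      push_neg at hx
      exact h0 x hx.1 hx.2)
  rw [← h, Finset.sum_insert (by simp [hpq]), Finset.sum_singleton]

lemma sum_three {n : ℕ} (g : Fin n → ℝ) (p q r : Fin n) (hpq : p ≠ q) (hpr : p ≠ r)
    (hqr : q ≠ r) (h0 : ∀ x, x ≠ p → x ≠ q → x ≠ r → g x = 0) :
    ∑ x, g x = g p + g q + g r := by
  have h := Finset.sum_subset (Finset.subset_univ ({p, q, r} : Finset (Fin n)))
    (fun x _ hx => by
      simp only [Finset.mem_insert, Finset.mem_singleton] at hx
      push_neg at hx
      exact h0 x hx.1 hx.2.1 hx.2.2)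
  rw [← h, Finset.sum_insert (by simp [hpq, hpr]),
    Finset.sum_insert (by simp [hqr]), Finset.sum_singleton, add_assoc]

end BDaux

namespace BDaux

variable (a b : ℕ → ℝ)

lemma mulVec_w (s : ℝ) (n : ℕ) (hn : 2 ≤ n) :
    (M a b s n).mulVec
      (fun k : Fin n => D a b s n - (∏ r ∈ Finset.Ico (k:ℕ) n, b r) * D a b s (k:ℕ))
      = fun _ => s * D a b s n := by
  set w : Fin n → ℝ :=
    fun k : Fin n => D a b s n - (∏ r ∈ Finset.Ico (k:ℕ) n, b r) * D a b s (k:ℕ) with hwdef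
  funext j
  have hjlt := j.isLt
  simp only [Matrix.mulVec, dotProduct]
  by_cases hj0 : (j:ℕ) = 0
  · -- first row
    have h0n : (0:ℕ) < n := by omega
    have h1n : (1:ℕ) < n := by omega
    have hj' : j = ⟨0, h0n⟩ := Fin.ext hj0
    rw [sum_two (fun x => M a b s n j x * w x) ⟨0, h0n⟩ ⟨1, h1n⟩
      (by intro h; have := congrArg Fin.val h; simp at this)
      (by
        intro x hxp hxq
        have hx0 : (x:ℕ) ≠ 0 := fun h => hxp (Fin.ext h)
        have hx1 : (x:ℕ) ≠ 1 := fun h => hxq (Fin.ext h)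
        have hz : M a b s n j x = 0 := by
          rw [M_apply]
          split_ifs <;> first | rfl | (exfalso; omega)
        show M a b s n j x * w x = 0
        rw [hz, zero_mul])]
    have e1 : M a b s n j ⟨0, h0n⟩ = s + b 0 := by
      rw [hj', M_apply_mk, if_neg (by omega), if_neg (by omega), if_pos rfl, if_pos rfl]
    have e2 : M a b s n j ⟨1, h1n⟩ = -b 0 := by
      rw [hj', M_apply_mk, if_pos rfl]
    have w1 : w ⟨0, h0n⟩ = D a b s n - (∏ r ∈ Finset.Ico 0 n, b r) * D a b s 0 := rfl
    have w2 : w ⟨1, h1n⟩ = D a b s n - (∏ r ∈ Finset.Ico 1 n, b r) * D a b s 1 := rfl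
    show M a b s n j ⟨0, h0n⟩ * w ⟨0, h0n⟩ + M a b s n j ⟨1, h1n⟩ * w ⟨1, h1n⟩
      = s * D a b s n
    rw [e1, e2, w1, w2, D_zero, D_one, Finset.prod_eq_prod_Ico_succ_bot h0n]
    ring
  · obtain ⟨m, hm⟩ : ∃ m, (j:ℕ) = m + 1 := ⟨(j:ℕ) - 1, by omega⟩
    have hmn : m < n := by omega
    have hm1n : m + 1 < n := by omega
    have hj' : j = ⟨m + 1, hm1n⟩ := Fin.ext hm
    by_cases hjl : (j:ℕ) = n - 1
    · -- last row
      have hn2 : n = m + 2 := by omega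
      subst hn2
      rw [sum_two (fun x => M a b s (m+2) j x * w x) ⟨m, hmn⟩ ⟨m+1, hm1n⟩
        (by intro h; have := congrArg Fin.val h; simp at this)
        (by
          intro x hxp hxq
          have hx0 : (x:ℕ) ≠ m := fun h => hxp (Fin.ext h)
          have hx1 : (x:ℕ) ≠ m + 1 := fun h => hxq (Fin.ext h)
          have hxlt := x.isLt
          have hz : M a b s (m+2) j x = 0 := by
            rw [M_apply]
            split_ifs <;> first | rfl | (exfalso; omega)
          show M a b s (m+2) j x * w x = 0
          rw [hz, zero_mul])]
      have e1 : M a b s (m+2) j ⟨m, hmn⟩ = -a (m+1) := by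
        rw [hj', M_apply_mk, if_neg (by omega), if_pos rfl]
      have e2 : M a b s (m+2) j ⟨m+1, hm1n⟩ = s + (a (m+1) + b (m+1)) := by
        rw [hj', M_apply_mk, if_neg (by omega), if_neg (by omega), if_pos rfl,
          if_neg (by omega)]
      have w1 : w ⟨m, hmn⟩ = D a b s (m+2) - (∏ r ∈ Finset.Ico m (m+2), b r) * D a b s m := rfl
      have w2 : w ⟨m+1, hm1n⟩
          = D a b s (m+2) - (∏ r ∈ Finset.Ico (m+1) (m+2), b r) * D a b s (m+1) := rfl
      show M a b s (m+2) j ⟨m, hmn⟩ * w ⟨m, hmn⟩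
        + M a b s (m+2) j ⟨m+1, hm1n⟩ * w ⟨m+1, hm1n⟩ = s * D a b s (m+2)
      rw [e1, e2, w1, w2, Finset.prod_eq_prod_Ico_succ_bot hmn, Nat.Ico_succ_singleton,
        Finset.prod_singleton, D_rec]
      ring
    · -- middle row
      have hm2n : m + 2 < n := by omega
      rw [sum_three (fun x => M a b s n j x * w x) ⟨m, hmn⟩ ⟨m+1, hm1n⟩ ⟨m+2, hm2n⟩
        (by intro h; have := congrArg Fin.val h; simp at this)
        (by intro h; have := congrArg Fin.val h; simp at this)
        (by intro h; have := congrArg Fin.val h; simp at this)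
        (by
          intro x hxp hxq hxr
          have hx0 : (x:ℕ) ≠ m := fun h => hxp (Fin.ext h)
          have hx1 : (x:ℕ) ≠ m + 1 := fun h => hxq (Fin.ext h)
          have hx2 : (x:ℕ) ≠ m + 2 := fun h => hxr (Fin.ext h)
          have hxlt := x.isLt
          have hz : M a b s n j x = 0 := by
            rw [M_apply]
            split_ifs <;> first | rfl | (exfalso; omega)
          show M a b s n j x * w x = 0
          rw [hz, zero_mul])]
      have e1 : M a b s n j ⟨m, hmn⟩ = -a (m+1) := by
        rw [hj', M_apply_mk, if_neg (by omega), if_pos rfl]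
      have e2 : M a b s n j ⟨m+1, hm1n⟩ = s + (a (m+1) + b (m+1)) := by
        rw [hj', M_apply_mk, if_neg (by omega), if_neg (by omega), if_pos rfl,
          if_neg (by omega)]
      have e3 : M a b s n j ⟨m+2, hm2n⟩ = -b (m+1) := by
        rw [hj', M_apply_mk, if_pos rfl]
      have w1 : w ⟨m, hmn⟩ = D a b s n - (∏ r ∈ Finset.Ico m n, b r) * D a b s m := rfl
      have w2 : w ⟨m+1, hm1n⟩
          = D a b s n - (∏ r ∈ Finset.Ico (m+1) n, b r) * D a b s (m+1) := rfl
      have w3 : w ⟨m+2, hm2n⟩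
          = D a b s n - (∏ r ∈ Finset.Ico (m+2) n, b r) * D a b s (m+2) := rfl
      show M a b s n j ⟨m, hmn⟩ * w ⟨m, hmn⟩ + M a b s n j ⟨m+1, hm1n⟩ * w ⟨m+1, hm1n⟩
        + M a b s n j ⟨m+2, hm2n⟩ * w ⟨m+2, hm2n⟩ = s * D a b s n
      rw [e1, e2, e3, w1, w2, w3, Finset.prod_eq_prod_Ico_succ_bot hmn,
        Finset.prod_eq_prod_Ico_succ_bot hm1n, D_rec]
      ring

end BDaux

namespace BDaux

variable (a b : ℕ → ℝ)

lemma core (ha : ∀ k, 1 ≤ k → 0 < a k) (hb : ∀ k, 0 < b k)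
    (s : ℝ) (hs : 0 ≤ s) (i n : ℕ) (hin : i < n) (hn : 2 ≤ n) :
    1 - s * ∑ j : Fin n, (M a b s n)⁻¹ ⟨i, hin⟩ j
      = (∏ r ∈ Finset.Ico i n, b r) * D a b s i / D a b s n := by
  have hdn : 0 < D a b s n := D_pos a b ha hb s hs n
  have hdet : IsUnit (M a b s n).det := isUnit_iff_ne_zero.mpr (ne_of_gt hdn)
  have hinv : (M a b s n)⁻¹ * M a b s n = 1 := Matrix.nonsing_inv_mul _ hdet
  have h2 : (M a b s n)⁻¹.mulVec ((M a b s n).mulVec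
      (fun k : Fin n => D a b s n - (∏ r ∈ Finset.Ico (k:ℕ) n, b r) * D a b s (k:ℕ)))
      = (M a b s n)⁻¹.mulVec (fun _ => s * D a b s n) := by rw [mulVec_w a b s n hn]
  rw [Matrix.mulVec_mulVec, hinv, Matrix.one_mulVec] at h2
  have h3 : D a b s n - (∏ r ∈ Finset.Ico i n, b r) * D a b s i
      = ∑ j, (M a b s n)⁻¹ ⟨i, hin⟩ j * (s * D a b s n) := congrFun h2 ⟨i, hin⟩
  rw [← Finset.sum_mul] at h3
  rw [eq_div_iff (ne_of_gt hdn)]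
  linear_combination h3

end BDaux


/-- Corollary 2.1: for `1 ≤ i < n` and `s > 0`, the Laplace transform of the
hitting time of `n` from `i` satisfies
`1 − s·Σ_j ((s•I − Q^{(n)})⁻¹)_{i,j}
  = det(−Q^{(n)})·det(s•I − Q^{(i)}) / (det(s•I − Q^{(n)})·det(−Q^{(i)}))`. -/
theorem laplace_transform_hitting_time_ratio
    (a b : ℕ → ℝ) (ha : ∀ k, 1 ≤ k → 0 < a k) (hb : ∀ k, 0 < b k)
    (i n : ℕ) (hi : 1 ≤ i) (hin : i < n)
    (s : ℝ) (hs : 0 < s) :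
    1 - s * ∑ j : Fin n,
        (s • (1 : Matrix (Fin n) (Fin n) ℝ) - bdMatrix a b n)⁻¹ ⟨i, hin⟩ j =
      ((-(bdMatrix a b n)).det *
          (s • (1 : Matrix (Fin i) (Fin i) ℝ) - bdMatrix a b i).det) /
        ((s • (1 : Matrix (Fin n) (Fin n) ℝ) - bdMatrix a b n).det *
          (-(bdMatrix a b i)).det) := by
  have hn2 : 2 ≤ n := by omega
  have hdsn : 0 < BDaux.D a b s n := BDaux.D_pos a b ha hb s hs.le n
  have hdsi : 0 < BDaux.D a b s i := BDaux.D_pos a b ha hb s hs.le i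
  have hd0n : 0 < BDaux.D a b 0 n := BDaux.D_pos a b ha hb 0 le_rfl n
  have hd0i : 0 < BDaux.D a b 0 i := BDaux.D_pos a b ha hb 0 le_rfl i
  have hM0 : ∀ m : ℕ, BDaux.M a b 0 m = -(bdMatrix a b m) := by
    intro m; rw [BDaux.M, zero_smul, zero_sub]
  have hcs := BDaux.core a b ha hb s hs.le i n hin hn2
  have hc0 := BDaux.core a b ha hb 0 le_rfl i n hin hn2
  rw [zero_mul, sub_zero, eq_comm, div_eq_one_iff_eq (ne_of_gt hd0n)] at hc0
  -- hc0 : P * D 0 i = D 0 n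
  have hdets_n : (s • (1 : Matrix (Fin n) (Fin n) ℝ) - bdMatrix a b n).det
      = BDaux.D a b s n := rfl
  have hdets_i : (s • (1 : Matrix (Fin i) (Fin i) ℝ) - bdMatrix a b i).det
      = BDaux.D a b s i := rfl
  have hdet0_n : (-(bdMatrix a b n)).det = BDaux.D a b 0 n := by
    rw [BDaux.D, hM0]
  have hdet0_i : (-(bdMatrix a b i)).det = BDaux.D a b 0 i := by
    rw [BDaux.D, hM0]
  have hMn : (s • (1 : Matrix (Fin n) (Fin n) ℝ) - bdMatrix a b n)⁻¹
      = (BDaux.M a b s n)⁻¹ := rfl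
  rw [hMn, hcs, hdets_n, hdets_i, hdet0_n, hdet0_i, ← hc0]
  field_simp
end
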